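/- Let A be an NFA whose recurrent states Qʳ form a single closed communicating class, and let Ψ be a merge operation from A to Ã. Then Ψ maps every recurrent state of A to a recurrent state of Ã, i.e., Ψ(Qʳ) ⊆ Q̃ʳ. -/

import Mathlib

/-- A nondeterministic finite automaton with state set `Q` over alphabet `σ`,
with a distinguished initial state, transition function and termination function. -/
structure NFA' (σ Q : Type) where
  start : Q
  step : Q → σ → Set Q
  accept : Q → Bool

namespace NFA'

variable {σ Q Q' : Type}

/-- `A.Reaches q q'` means `q'` is accessible from `q`, i.e. `q' ∈ τ⋆(q)`. -/
def Reaches (A : NFA' σ Q) : Q → Q → Prop :=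
  Relation.ReflTransGen (fun p q => ∃ a, q ∈ A.step p a)

/-- A state is recurrent iff it belongs to a closed communicating class,
iff every state accessible from it can access it back. -/
def Recurrent (A : NFA' σ Q) (q : Q) : Prop :=
  ∀ q', A.Reaches q q' → A.Reaches q' q

/-- The communicating class of `q`: states that communicate with `q`. -/
def commClass (A : NFA' σ Q) (q : Q) : Set Q :=
  {q' | A.Reaches q q' ∧ A.Reaches q' q}

/-- A set of states is closed if no string leads outside of it: `τ⋆(C) = C`. -/
def Closed (A : NFA' σ Q) (C : Set Q) : Prop :=
  ∀ q ∈ C, ∀ q', A.Reaches q q' → q' ∈ C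

/-- The automaton has a single closed communicating class:
all recurrent states communicate with each other. -/
def SingleClosedClass (A : NFA' σ Q) : Prop :=
  ∀ q q', A.Recurrent q → A.Recurrent q' → A.Reaches q q'

/-- `τ₁(S)`: all states reachable from `S` by a single transition. -/
def step1 (A : NFA' σ Q) (S : Set Q) : Set Q :=
  {q' | ∃ q ∈ S, ∃ a, q' ∈ A.step q a}

/-- A set of states is `k`-periodic if it admits a partition into `k` (nonempty,
pairwise disjoint) parts `P 0, …, P (k-1)` with `τ₁(P i) = P ((i+1) mod k)`. -/
def Periodic (A : NFA' σ Q) (C : Set Q) (k : ℕ) : Prop :=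
  ∃ P : Fin k → Set Q,
    (∀ i, (P i).Nonempty) ∧
    (∀ i j, i ≠ j → Disjoint (P i) (P j)) ∧
    (⋃ i, P i) = C ∧
    ∀ i : Fin k, A.step1 (P i) = P ⟨(i.val + 1) % k, Nat.mod_lt _ i.pos⟩

/-- A set of states is aperiodic if it is not `k`-periodic for any `k > 1`. -/
def Aperiodic (A : NFA' σ Q) (C : Set Q) : Prop :=
  ∀ k, 1 < k → ¬ A.Periodic C k

/-- The transition function extended to strings (lists of symbols). -/
def stepStr (A : NFA' σ Q) : Q → List σ → Set Q
  | q, [] => {q}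
  | q, a :: x => ⋃ p ∈ A.step q a, A.stepStr p x

/-- A merge operation from `A` to `B` realized by a map `Ψ` on states. -/
structure MergeOp (A : NFA' σ Q) (B : NFA' σ Q') (Ψ : Q → Q') : Prop where
  surjective : Function.Surjective Ψ
  start_eq : Ψ A.start = B.start
  accept_eq : ∀ q, A.accept q = B.accept (Ψ q)
  step_mem : ∀ q a q', q' ∈ A.step q a → Ψ q' ∈ B.step (Ψ q) a

end NFA'

open NFA'


private lemma exists_recurrent_reachable {σ Q : Type} [Fintype Q] (A : NFA' σ Q) (q : Q) :
    ∃ r, A.Reaches q r ∧ A.Recurrent r := by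
  have key : ∀ n (q : Q), ({p | A.Reaches q p}).ncard ≤ n →
      ∃ r, A.Reaches q r ∧ A.Recurrent r := by
    intro n
    induction n with
    | zero =>
      intro q hq
      have hmem : q ∈ {p | A.Reaches q p} := Relation.ReflTransGen.refl
      have : 0 < ({p | A.Reaches q p}).ncard :=
        (Set.ncard_pos (Set.toFinite _)).mpr ⟨q, hmem⟩
      omega
    | succ n ih =>
      intro q hq
      by_cases h : A.Recurrent q
      · exact ⟨q, Relation.ReflTransGen.refl, h⟩
      · simp only [NFA'.Recurrent, not_forall] at h
        obtain ⟨q', hqq', hq'q⟩ := h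
        have hsub : {p | A.Reaches q' p} ⊂ {p | A.Reaches q p} := by
          constructor
          · intro p hp
            exact Relation.ReflTransGen.trans hqq' hp
          · intro hle
            exact hq'q (hle Relation.ReflTransGen.refl)
        have hlt : ({p | A.Reaches q' p}).ncard < ({p | A.Reaches q p}).ncard :=
          Set.ncard_lt_ncard hsub (Set.toFinite _)
        obtain ⟨r, hr1, hr2⟩ := ih q' (by omega)
        exact ⟨r, Relation.ReflTransGen.trans hqq' hr1, hr2⟩
  exact key _ q le_rfl

private lemma reaches_lift {σ Q Q' : Type} {A : NFA' σ Q} {B : NFA' σ Q'} {Ψ : Q → Q'}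
    (hΨ : MergeOp A B Ψ) {p q : Q} (h : A.Reaches p q) : B.Reaches (Ψ p) (Ψ q) :=
  Relation.ReflTransGen.lift Ψ (fun a b ⟨s, hs⟩ => ⟨s, hΨ.step_mem a s b hs⟩) p q h

/-- If the recurrent states of `A` form a single closed communicating class, then
a merge operation maps every recurrent state of `A` to a recurrent state of `B`. -/
theorem stmt_14 {σ Q Q' : Type} [Fintype Q] [Nonempty σ]
    (A : NFA' σ Q) (B : NFA' σ Q') (Ψ : Q → Q')
    (htotal : ∀ q a, (A.step q a).Nonempty)
    (hsingle : A.SingleClosedClass) (hΨ : MergeOp A B Ψ) :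
    ∀ q : Q, A.Recurrent q → B.Recurrent (Ψ q) := by
  intro q hq q' _
  obtain ⟨p, rfl⟩ := hΨ.surjective q'
  obtain ⟨r, hpr, hr⟩ := exists_recurrent_reachable A p
  exact Relation.ReflTransGen.trans (reaches_lift hΨ hpr) (reaches_lift hΨ (hsingle r q hr hq))
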